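/- Let 0 < m < n be integers and consider the 3×(n+3) integer matrices A and W defined as follows (columns indexed by S_0,…,S_n, E, F): the column of A at S_ℓ is (1, 0, 0)^t for 0 ≤ ℓ < m, (1, 1, −1)^t for m ≤ ℓ < n, (1, 2, −2)^t at S_n, (0,1,0)^t at E, and (0,0,1)^t at F; the column of W at every S_ℓ is (1,0,0)^t, at E is (0,1,0)^t, and at F is (0,0,1)^t. Then for every 3-element subset J of column indices, det(W_J) · det(A_J) ≥ 0. -/

import Mathlib

set_option maxHeartbeats 1000000

/-- Possible W-columns, indexed by a code in `Fin 5`. -/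
def wv : Fin 5 → (Fin 3 → ℚ) := ![![1,0,0], ![1,0,0], ![1,0,0], ![0,1,0], ![0,0,1]]

/-- Possible A-columns, indexed by a code in `Fin 5`. -/
def av : Fin 5 → (Fin 3 → ℚ) := ![![1,0,0], ![1,1,-1], ![1,2,-2], ![0,1,0], ![0,0,1]]

lemma key_pair (a b c : Fin 5) :
    0 ≤ (Matrix.of fun i j => wv (![a,b,c] j) i).det *
        (Matrix.of fun i j => av (![a,b,c] j) i).det := by
  fin_cases a <;> fin_cases b <;> fin_cases c <;>
    simp [Matrix.det_fin_three, wv, av]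

lemma key_minor (k : Fin 3 → Fin 5) :
    0 ≤ (Matrix.of fun i j => wv (k j) i).det * (Matrix.of fun i j => av (k j) i).det := by
  have hk : k = ![k 0, k 1, k 2] := by
    funext j; fin_cases j <;> rfl
  rw [hk]
  exact key_pair (k 0) (k 1) (k 2)

lemma col_case (m n : ℕ) (h0 : 0 < m) (hmn : m < n) (c : Fin (n + 3)) :
    ∃ k : Fin 5,
      (if (c : ℕ) ≤ n then ![(1:ℚ), 0, 0]
        else if (c : ℕ) = n + 1 then ![0, 1, 0] else ![0, 0, 1]) = wv k ∧
      (if (c : ℕ) < m then ![(1:ℚ), 0, 0]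
        else if (c : ℕ) < n then ![1, 1, -1]
        else if (c : ℕ) = n then ![1, 2, -2]
        else if (c : ℕ) = n + 1 then ![0, 1, 0]
        else ![0, 0, 1]) = av k := by
  have hc := c.isLt
  rcases lt_or_ge (c : ℕ) m with h1 | h1
  · have hle : (c : ℕ) ≤ n := by omega
    exact ⟨0, by simp [wv, hle], by simp [av, h1]⟩
  · have h1' : ¬ (c : ℕ) < m := by omega
    rcases lt_or_ge (c : ℕ) n with h2 | h2
    · have hle : (c : ℕ) ≤ n := by omega
      exact ⟨1, by simp [wv, hle], by simp [av, h1', h2]⟩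
    · have h2' : ¬ (c : ℕ) < n := by omega
      have : (c : ℕ) = n ∨ (c : ℕ) = n + 1 ∨ (c : ℕ) = n + 2 := by omega
      rcases this with h3 | h3 | h3
      · have e1 : ¬ n < m := by omega
        exact ⟨2, by simp [wv, h3], by simp [av, h1', h2', h3, e1]⟩
      · have hle : ¬ (c : ℕ) ≤ n := by omega
        have h4 : (c : ℕ) ≠ n := by omega
        have e1 : ¬ n + 1 < m := by omega
        have e2 : ¬ n + 1 < n := by omega
        have e3 : n + 1 ≠ n := by omega
        exact ⟨3, by simp [wv, hle, h3], by simp [av, h1', h2', h4, h3, e1, e2, e3]⟩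
      · have hle : ¬ (c : ℕ) ≤ n := by omega
        have h4 : (c : ℕ) ≠ n := by omega
        have h5 : (c : ℕ) ≠ n + 1 := by omega
        have e1 : ¬ n + 2 < m := by omega
        have e2 : ¬ n + 2 < n := by omega
        have e3 : n + 2 ≠ n := by omega
        have e4 : n + 2 ≠ n + 1 := by omega
        exact ⟨4, by simp [wv, hle, h5, h3], by simp [av, h1', h2', h4, h5, h3, e1, e2, e3, e4]⟩

/-- Minor sign condition for the network C_I with I = {0, m, n}: for the exponent
matrix A and conservation-law matrix W (columns indexed by S_0,…,S_n, E, F), all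
products of corresponding maximal minors are nonnegative. -/
theorem stmt_12 (m n : ℕ) (h0 : 0 < m) (hmn : m < n)
    (A W : Matrix (Fin 3) (Fin (n + 3)) ℚ)
    (hA : ∀ c : Fin (n + 3), (fun i => A i c) =
      if (c : ℕ) < m then ![1, 0, 0]
      else if (c : ℕ) < n then ![1, 1, -1]
      else if (c : ℕ) = n then ![1, 2, -2]
      else if (c : ℕ) = n + 1 then ![0, 1, 0]
      else ![0, 0, 1])
    (hW : ∀ c : Fin (n + 3), (fun i => W i c) =
      if (c : ℕ) ≤ n then ![1, 0, 0]
      else if (c : ℕ) = n + 1 then ![0, 1, 0]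
      else ![0, 0, 1])
    (J : Finset (Fin (n + 3))) (hJ : J.card = 3) (e : Fin 3 ≃ {x // x ∈ J}) :
    0 ≤ (W.submatrix id (fun i => (e i : Fin (n + 3)))).det *
        (A.submatrix id (fun i => (e i : Fin (n + 3)))).det := by
  set c : Fin 3 → Fin (n + 3) := fun j => (e j : Fin (n + 3)) with hcdef
  choose k hk1 hk2 using fun j => col_case m n h0 hmn (c j)
  have hWeq : W.submatrix id c = Matrix.of fun i j => wv (k j) i := by
    ext i j
    have := (hW (c j)).trans (hk1 j)
    exact congrFun this i
  have hAeq : A.submatrix id c = Matrix.of fun i j => av (k j) i := by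
    ext i j
    have := (hA (c j)).trans (hk2 j)
    exact congrFun this i
  rw [hWeq, hAeq]
  exact key_minor k
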